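/- Let Γ be a torsion-free group and let K be a subgroup of the permutation group of Γ normalized by all left translations (for every γ ∈ Γ and k ∈ K, the permutation x ↦ γ·k(γ⁻¹·x) lies in K). If the K-orbit of the identity element of Γ is finite, then K consists only of the identity permutation. -/

import Mathlib

/-- Let `Γ` be a torsion-free group and `K` a subgroup of `Perm Γ` normalized by all
left translations. If the `K`-orbit of the identity of `Γ` is finite, then `K` is
trivial. -/
theorem stmt2 {Γ : Type*} [Group Γ] (htf : ∀ g : Γ, g ≠ 1 → ¬IsOfFinOrder g)
    (K : Subgroup (Equiv.Perm Γ))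
    (hK : ∀ γ : Γ, ∀ k ∈ K,
      (Equiv.mulLeft γ⁻¹).trans (k.trans (Equiv.mulLeft γ)) ∈ K)
    (hfin : {x : Γ | ∃ k ∈ K, k 1 = x}.Finite) :
    K = ⊥ := by
  have key : ∀ k ∈ K, k 1 = 1 := by
    intro k hk
    by_contra ha
    set a : Γ := k 1 with ha'
    have H : ∀ n : ℕ, ∃ g ∈ K, g 1 = a ^ n := by
      intro n
      induction n with
      | zero => exact ⟨1, K.one_mem, by simp⟩
      | succ n ih =>
        obtain ⟨g, hg, hg1⟩ := ih
        refine ⟨((Equiv.mulLeft (a ^ n)⁻¹).trans (k.trans (Equiv.mulLeft (a ^ n)))) * g,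
          K.mul_mem (hK _ k hk) hg, ?_⟩
        simp [Equiv.Perm.mul_apply, hg1, ← ha', pow_succ]
    have hinj : Function.Injective (fun n : ℕ => a ^ n) := by
      have hfo : ¬ IsOfFinOrder a := htf a ha
      intro m n hmn
      by_contra hne
      rcases Nat.lt_or_ge m n with h | h
      · refine hfo ((isOfFinOrder_iff_pow_eq_one).2 ⟨n - m, by omega, ?_⟩)
        rw [pow_sub a h.le]
        simp_all
      · have h' : n < m := by omega
        refine hfo ((isOfFinOrder_iff_pow_eq_one).2 ⟨m - n, by omega, ?_⟩)
        rw [pow_sub a h'.le]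
        simp_all
    have : {x : Γ | ∃ k ∈ K, k 1 = x}.Infinite :=
      Set.infinite_of_injective_forall_mem hinj (fun n => H n)
    exact this hfin
  rw [eq_bot_iff]
  intro k hk
  simp only [Subgroup.mem_bot]
  ext x
  have h := key _ (hK x⁻¹ k hk)
  simp only [Equiv.trans_apply, Equiv.coe_mulLeft, inv_inv, mul_one] at h
  have : k x = x := by
    have := congrArg (fun y => x * y) h
    simpa [mul_assoc] using this
  simpa using this
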